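/- Assume r ≥ 3. The map c_1 : F_q → F_2^{q−2} sending a to (tr(a·γ_1^{-1}), ..., tr(a·γ_{q/2−1}^{-1}), tr(a·γ_1^{-1}), ..., tr(a·γ_{q/2−1}^{-1})) is an injective F_2-linear (additive) map, and its image is exactly the dual code C_1^⊥ = {w ∈ F_2^{q−2} : Σ_l w_l·u_l = 0 in F_2 for all u ∈ C_1}. In particular C_1^⊥ has exactly q elements. -/

import Mathlib

open Finset

/-- The trace map `tr : F_q → F_2 ⊆ F_q`, `tr x = x + x² + ⋯ + x^(2^(r-1))`. -/
def trF {F : Type*} [Field F] (r : ℕ) (x : F) : F :=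
  ∑ i ∈ Finset.range r, x ^ (2 ^ i)

/-- The trace map with values in `F_2 = ZMod 2` (the value of `trF` is always `0` or `1`). -/
def tr2 {F : Type*} [Field F] [DecidableEq F] (r : ℕ) (x : F) : ZMod 2 :=
  if trF r x = 0 then 0 else 1

/-- The binary linear code `C = {u ∈ F_2^n : ∑_l u_l·v_l = 0 in F_q}`, where `u_l ∈ F_2`
acts on `F_q` through the inclusion `F_2 ⊆ F_q`. -/
def codeSet {F : Type*} [Field F] {n : ℕ} (v : Fin n → F) : Set (Fin n → ZMod 2) :=
  {u | ∑ l, (u l).val • v l = 0}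

/-- The dual code `C^⊥ = {w ∈ F_2^n : ∑_l w_l·u_l = 0 in F_2 for all u ∈ C}`. -/
def dualSet {F : Type*} [Field F] {n : ℕ} (v : Fin n → F) : Set (Fin n → ZMod 2) :=
  {w | ∀ u ∈ codeSet v, ∑ l, w l * u l = 0}

/-- The vector `(g_1⁻¹, …, g_m⁻¹, g_1⁻¹, …, g_m⁻¹) ∈ F_q^n`, where `n = m + m`. -/
def doubledInvVec {F : Type*} [Field F] {m n : ℕ} (g : Fin m → F) (hN : n = m + m) :
    Fin n → F :=
  fun l => (Fin.append g g (Fin.cast hN l))⁻¹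

/-- The codeword map `a ↦ (tr(a·v_1), …, tr(a·v_n)) ∈ F_2^n`. -/
def cw {F : Type*} [Field F] [DecidableEq F] (r : ℕ) {n : ℕ} (v : Fin n → F) (a : F) :
    Fin n → ZMod 2 :=
  fun l => tr2 r (a * v l)

section AuxLemmas
set_option linter.unusedSectionVars false
set_option linter.unusedVariables false
variable {F : Type*} [Field F]

lemma charF [Fintype F] {r : ℕ} (hF : Fintype.card F = 2 ^ r) : CharP F 2 := by
  have h0 : (((2:ℕ)^r : ℕ) : F) = 0 := by
    rw [← hF]; exact FiniteField.cast_card_eq_zero F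
  have hdvd : ringChar F ∣ 2 ^ r := (ringChar.spec F _).mp h0
  haveI : Fact (Nat.Prime 2) := ⟨Nat.prime_two⟩
  have hp : (ringChar F).Prime := by
    haveI := ringChar.charP F
    exact CharP.char_is_prime F (ringChar F)
  have : ringChar F = 2 := by
    rcases (Nat.Prime.dvd_of_dvd_pow hp hdvd) with h
    exact (Nat.prime_dvd_prime_iff_eq hp Nat.prime_two).mp h
  exact this ▸ ringChar.charP F

section char2
variable [CharP F 2] (r : ℕ)

lemma trF_add (x y : F) : trF r (x + y) = trF r x + trF r y := by
  haveI : Fact (Nat.Prime 2) := ⟨Nat.prime_two⟩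
  unfold trF
  rw [← Finset.sum_add_distrib]
  exact Finset.sum_congr rfl fun i _ => add_pow_char_pow x y 2 i

lemma trF_zero : trF r (0 : F) = 0 := by
  unfold trF
  refine Finset.sum_eq_zero fun i _ => ?_
  exact zero_pow (by positivity)

set_option linter.unusedSectionVars false

lemma trF_sq [Fintype F] (hF : Fintype.card F = 2 ^ r) (x : F) :
    trF r x * trF r x = trF r x := by
  haveI : Fact (Nat.Prime 2) := ⟨Nat.prime_two⟩
  have hx : x ^ 2 ^ r = x := by rw [← hF]; exact FiniteField.pow_card x
  have hsq : trF r x * trF r x = ∑ i ∈ Finset.range r, x ^ 2 ^ (i + 1) := by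
    rw [← pow_two]
    unfold trF
    rw [sum_pow_char]
    exact Finset.sum_congr rfl fun i _ => by rw [← pow_mul, pow_succ]
  have k1 := Finset.sum_range_succ' (fun i => x ^ 2 ^ i) r
  have k2 := Finset.sum_range_succ (fun i => x ^ 2 ^ i) r
  have key : (∑ i ∈ Finset.range r, x ^ 2 ^ (i + 1)) + x ^ 2 ^ 0
      = trF r x + x ^ 2 ^ r := by
    rw [← k1, k2]; rfl
  have h2 : (2 : F) = 0 := by
    have := CharP.cast_eq_zero F 2; exact_mod_cast this
  have := key
  rw [pow_zero, pow_one, hx] at this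
  have := add_right_cancel this
  rw [hsq, this]

lemma trF_zero_or_one [Fintype F] (hF : Fintype.card F = 2 ^ r) (x : F) :
    trF r x = 0 ∨ trF r x = 1 := by
  have h := trF_sq r hF x
  have : trF r x * (trF r x - 1) = 0 := by ring_nf; rw [mul_comm] at h; linear_combination h
  rcases mul_eq_zero.mp this with h1 | h1
  · exact Or.inl h1
  · exact Or.inr (sub_eq_zero.mp h1)

lemma trF_exists_ne [Fintype F] (hr : 1 ≤ r) (hF : Fintype.card F = 2 ^ r) :
    ∃ x : F, trF r x ≠ 0 := by
  by_contra h
  push_neg at h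
  set P : Polynomial F := ∑ i ∈ Finset.range r, Polynomial.X ^ (2 ^ i) with hP
  have heval : ∀ x : F, P.eval x = trF r x := by
    intro x
    simp [hP, trF, Polynomial.eval_finset_sum]
  have hdeg : P.natDegree ≤ 2 ^ (r - 1) := by
    apply Polynomial.natDegree_sum_le_of_forall_le
    intro i hi
    rw [Polynomial.natDegree_X_pow]
    have := Finset.mem_range.mp hi
    exact Nat.pow_le_pow_right (by norm_num) (by omega : i ≤ r - 1)
  have hzero : P = 0 := by
    apply Polynomial.eq_zero_of_natDegree_lt_card_of_eval_eq_zero P (f := id) Function.injective_id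
    · intro x; rw [heval]; exact h x
    · calc P.natDegree ≤ 2 ^ (r-1) := hdeg
        _ < 2 ^ r := Nat.pow_lt_pow_right (by norm_num) (by omega)
        _ = Fintype.card F := hF.symm
  have hcoeff : P.coeff (2 ^ (r - 1)) = 1 := by
    rw [hP, Polynomial.finset_sum_coeff]
    rw [Finset.sum_eq_single (r - 1)]
    · simp
    · intro i hi hne
      rw [Polynomial.coeff_X_pow]
      have : 2 ^ i ≠ 2 ^ (r-1) := fun hc => hne (Nat.pow_right_injective (le_refl 2) hc)
      rw [if_neg (fun hc : (2:ℕ)^(r-1) = 2^i => this hc.symm)]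
    · intro hmem; exact absurd (Finset.mem_range.mpr (by omega)) hmem
  rw [hzero] at hcoeff
  simp at hcoeff

end char2

section char2b
variable [CharP F 2] (r : ℕ)

lemma trF_frob [Fintype F] (hF : Fintype.card F = 2 ^ r) (x : F) :
    trF r (x ^ 2) = trF r x := by
  have hx : x ^ 2 ^ r = x := by rw [← hF]; exact FiniteField.pow_card x
  have hsq : trF r (x ^ 2) = ∑ i ∈ Finset.range r, x ^ 2 ^ (i + 1) := by
    unfold trF
    exact Finset.sum_congr rfl fun i _ => by rw [← pow_mul, ← pow_succ']
  have k1 := Finset.sum_range_succ' (fun i => x ^ 2 ^ i) r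
  have k2 := Finset.sum_range_succ (fun i => x ^ 2 ^ i) r
  have key : (∑ i ∈ Finset.range r, x ^ 2 ^ (i + 1)) + x ^ 2 ^ 0
      = trF r x + x ^ 2 ^ r := by
    rw [← k1, k2]; rfl
  rw [pow_zero, pow_one, hx] at key
  rw [hsq]
  exact add_right_cancel key

lemma trF_AS [Fintype F] (hr : 1 ≤ r) (hF : Fintype.card F = 2 ^ r) (β : F) :
    trF r β = 0 ↔ ∃ α : F, β = α ^ 2 + α := by
  classical
  set K : Finset F := Finset.univ.filter (fun β => trF r β = 0) with hK
  set I : Finset F := Finset.univ.image (fun α => α ^ 2 + α) with hI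
  have hIK : I ⊆ K := by
    intro b hb
    rw [hI, Finset.mem_image] at hb
    obtain ⟨α, _, rfl⟩ := hb
    rw [hK, Finset.mem_filter]
    refine ⟨Finset.mem_univ _, ?_⟩
    rw [trF_add, trF_frob r hF, CharTwo.add_self_eq_zero]
  -- card K = 2^(r-1)
  obtain ⟨c, hc⟩ := trF_exists_ne r hr hF
  have hc1 : trF r c = 1 := (trF_zero_or_one r hF c).resolve_left hc
  have hcard_eq : K.card = (Finset.univ.filter (fun β : F => trF r β ≠ 0)).card := by
    apply Finset.card_bij' (fun β _ => β + c) (fun β _ => β + c)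
    · intro β hβ
      rw [Finset.mem_filter] at hβ ⊢
      refine ⟨Finset.mem_univ _, ?_⟩
      rw [trF_add, hβ.2, hc1, zero_add]
      exact one_ne_zero
    · intro β hβ
      rw [Finset.mem_filter] at hβ ⊢
      refine ⟨Finset.mem_univ _, ?_⟩
      have := (trF_zero_or_one r hF β).resolve_left hβ.2
      rw [trF_add, this, hc1, CharTwo.add_self_eq_zero]
    · intro β _; rw [add_assoc, CharTwo.add_self_eq_zero, add_zero]
    · intro β _; rw [add_assoc, CharTwo.add_self_eq_zero, add_zero]
  have hsplit : K.card + (Finset.univ.filter (fun β : F => trF r β ≠ 0)).card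
      = Fintype.card F := by
    rw [hK, Finset.card_filter_add_card_filter_not]
    exact Finset.card_univ
  have hKcard : K.card = 2 ^ (r - 1) := by
    rw [hF] at hsplit
    rw [← hcard_eq] at hsplit
    have h2r : 2 ^ r = 2 * 2 ^ (r - 1) := by
      rw [← pow_succ']
      congr 1
      omega
    omega
  -- card I ≥ 2^(r-1)
  have hfib : ∀ b : F, (Finset.univ.filter (fun α : F => α ^ 2 + α = b)).card ≤ 2 := by
    intro b
    rcases Finset.eq_empty_or_nonempty (Finset.univ.filter (fun α : F => α ^ 2 + α = b)) with he | ⟨α₀, hα₀⟩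
    · rw [he]; norm_num
    · rw [Finset.mem_filter] at hα₀
      have hsub : (Finset.univ.filter (fun α : F => α ^ 2 + α = b)) ⊆ {α₀, α₀ + 1} := by
        intro α hα
        rw [Finset.mem_filter] at hα
        have key : (α + α₀) * (α + α₀ + 1) = 0 := by
          have : (α + α₀) * (α + α₀ + 1) = (α ^ 2 + α) + (α₀ ^ 2 + α₀) + 2*α*α₀ := by ring
          rw [this, hα.2, hα₀.2, CharTwo.add_self_eq_zero]
          have h2 : (2 : F) = 0 := by exact_mod_cast CharP.cast_eq_zero F 2
          rw [h2]; ring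
        rcases mul_eq_zero.mp key with h0 | h0
        · have : α = α₀ := by
            have := congrArg (· + α₀) h0
            simpa [add_assoc, CharTwo.add_self_eq_zero] using this
          simp [this]
        · have : α = α₀ + 1 := by
            have : α + α₀ = 1 := by
              have := congrArg (· + 1) h0
              simpa [add_assoc, CharTwo.add_self_eq_zero] using this
            have := congrArg (· + α₀) this
            simp only [add_comm, add_left_comm] at this ⊢
            calc α = α + α₀ + α₀ := by rw [add_assoc, CharTwo.add_self_eq_zero, add_zero]
              _ = 1 + α₀ := by rw [‹α + α₀ = 1›]
              _ = α₀ + 1 := by rw [add_comm]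
          simp [this]
      calc (Finset.univ.filter (fun α : F => α ^ 2 + α = b)).card
          ≤ ({α₀, α₀ + 1} : Finset F).card := Finset.card_le_card hsub
        _ ≤ 2 := Finset.card_insert_le _ _ |>.trans (by norm_num)
  have hsum : Fintype.card F ≤ 2 * I.card := by
    have := Finset.card_eq_sum_card_image (fun α : F => α ^ 2 + α) Finset.univ
    rw [← Finset.card_univ, this, ← hI]
    calc (∑ b ∈ I, (Finset.univ.filter (fun α : F => α ^ 2 + α = b)).card)
        ≤ ∑ _b ∈ I, 2 := Finset.sum_le_sum (fun b _ => hfib b)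
      _ = 2 * I.card := by rw [Finset.sum_const, smul_eq_mul, mul_comm]
  have hIeqK : I = K := by
    apply Finset.eq_of_subset_of_card_le hIK
    rw [hKcard]
    rw [hF] at hsum
    have h2r : 2 ^ r = 2 * 2 ^ (r - 1) := by
      rw [← pow_succ']; congr 1; omega
    omega
  constructor
  · intro h
    have : β ∈ K := by rw [hK, Finset.mem_filter]; exact ⟨Finset.mem_univ _, h⟩
    rw [← hIeqK, hI, Finset.mem_image] at this
    obtain ⟨α, _, hα⟩ := this
    exact ⟨α, hα.symm⟩
  · rintro ⟨α, rfl⟩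
    have : (α ^ 2 + α) ∈ I := by
      rw [hI, Finset.mem_image]; exact ⟨α, Finset.mem_univ _, rfl⟩
    rw [hIeqK, hK, Finset.mem_filter] at this
    exact this.2

end char2b

section tr2sec
variable [DecidableEq F] [CharP F 2] (r : ℕ)

lemma tr2_eq_zero_iff (x : F) : tr2 r x = 0 ↔ trF r x = 0 := by
  unfold tr2; split <;> simp_all

lemma tr2_zero : tr2 r (0 : F) = 0 := by
  simp [tr2, trF_zero]

lemma tr2_add [Fintype F] (hF : Fintype.card F = 2 ^ r) (x y : F) :
    tr2 r (x + y) = tr2 r x + tr2 r y := by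
  unfold tr2
  rcases trF_zero_or_one r hF x with hx | hx <;>
    rcases trF_zero_or_one r hF y with hy | hy <;>
      rw [trF_add, hx, hy] <;>
        simp [one_ne_zero, CharTwo.add_self_eq_zero]

lemma key_inj [Fintype F] (hr : 3 ≤ r) (hF : Fintype.card F = 2 ^ r)
    (a : F) (ha : a ≠ 0)
    (h : ∀ β : F, β ≠ 0 → trF r β = 0 → trF r (a * β⁻¹) = 0) : False := by
  classical
  set A : Finset F := Finset.univ.filter (fun x => x ≠ 0 ∧ trF r x = 0) with hA
  set B : Finset F := Finset.univ.filter (fun x => x ≠ 0 ∧ trF r (a * x⁻¹) = 0) with hB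
  have hAB : A ⊆ B := by
    intro x hx
    rw [hA, Finset.mem_filter] at hx
    rw [hB, Finset.mem_filter]
    exact ⟨Finset.mem_univ _, hx.2.1, h x hx.2.1 hx.2.2⟩
  have hBA : B.card = A.card := by
    apply Finset.card_bij' (fun x _ => a * x⁻¹) (fun y _ => a * y⁻¹)
    · intro x hx
      rw [hB, Finset.mem_filter] at hx
      rw [hA, Finset.mem_filter]
      exact ⟨Finset.mem_univ _, mul_ne_zero ha (inv_ne_zero hx.2.1), hx.2.2⟩
    · intro y hy
      rw [hA, Finset.mem_filter] at hy
      rw [hB, Finset.mem_filter]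
      refine ⟨Finset.mem_univ _, mul_ne_zero ha (inv_ne_zero hy.2.1), ?_⟩
      have : a * (a * y⁻¹)⁻¹ = y := by field_simp
      rw [this]; exact hy.2.2
    · intro x hx
      rw [hB, Finset.mem_filter] at hx
      field_simp
    · intro y hy
      rw [hA, Finset.mem_filter] at hy
      field_simp
  have hABeq : A = B := Finset.eq_of_subset_of_card_le hAB (le_of_eq hBA)
  have heq : ∀ x : F, x ≠ 0 → trF r (a * x⁻¹) = trF r x := by
    intro x hx
    have hiff : trF r x = 0 ↔ trF r (a * x⁻¹) = 0 := by
      constructor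
      · exact h x hx
      · intro hx2
        have : x ∈ B := by
          rw [hB, Finset.mem_filter]; exact ⟨Finset.mem_univ _, hx, hx2⟩
        rw [← hABeq, hA, Finset.mem_filter] at this
        exact this.2.2
    rcases trF_zero_or_one r hF x with h1 | h1
    · rw [h1, hiff.mp h1]
    · rw [h1]
      rcases trF_zero_or_one r hF (a * x⁻¹) with h2 | h2
      · exfalso
        have h0 := hiff.mpr h2
        rw [h1] at h0
        exact one_ne_zero h0
      · exact h2
  -- choose t
  have hq8 : 8 ≤ Fintype.card F := by
    rw [hF]
    calc (8:ℕ) = 2 ^ 3 := by norm_num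
      _ ≤ 2 ^ r := Nat.pow_le_pow_right (by norm_num) hr
  set P : Polynomial F := Polynomial.X ^ 2 + Polynomial.X + 1 with hP
  have hPne : P ≠ 0 := by
    intro hc
    have : P.coeff 0 = 1 := by simp [hP]
    rw [hc] at this; simp at this
  have hPdeg : P.natDegree ≤ 2 := by
    rw [hP]
    compute_degree
  set S : Finset F := ({0, 1} : Finset F) ∪ P.roots.toFinset with hS
  have hScard : S.card ≤ 4 := by
    calc S.card ≤ ({0,1} : Finset F).card + P.roots.toFinset.card := Finset.card_union_le _ _
      _ ≤ 2 + 2 := by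
          gcongr
          · exact (Finset.card_insert_le _ _).trans (by norm_num)
          · exact (Multiset.toFinset_card_le _).trans ((Polynomial.card_roots' P).trans hPdeg)
      _ = 4 := by norm_num
  have : ∃ t : F, t ∉ S := by
    by_contra hc
    push_neg at hc
    have : (Finset.univ : Finset F) ⊆ S := fun x _ => hc x
    have := Finset.card_le_card this
    rw [Finset.card_univ] at this
    omega
  obtain ⟨t, htS⟩ := this
  rw [hS, Finset.mem_union, Finset.mem_insert, Finset.mem_singleton] at htS
  push_neg at htS
  obtain ⟨⟨ht0, ht1⟩, htroot⟩ := htS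
  have ht2 : t ^ 2 + t + 1 ≠ 0 := by
    intro hc
    apply htroot
    rw [Multiset.mem_toFinset, Polynomial.mem_roots hPne]
    simp [hP, Polynomial.IsRoot, hc]
  have ht1' : (1 : F) + t ≠ 0 := by
    intro hc
    apply ht1
    have := congrArg (fun w => w + t) hc
    simp only [zero_add] at this
    rw [add_assoc, CharTwo.add_self_eq_zero, add_zero] at this
    exact this.symm
  set u : F := 1 + t⁻¹ + (1 + t)⁻¹ with hu_def
  have hu : u ≠ 0 := by
    intro hc
    apply ht2
    rw [hu_def] at hc
    field_simp at hc
    have h2 : (2 : F) = 0 := by exact_mod_cast CharP.cast_eq_zero F 2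
    linear_combination hc - t * h2
  have htr : ∀ z : F, trF r (z * u) = 0 := by
    intro z
    rcases eq_or_ne z 0 with rfl | hz
    · rw [zero_mul]; exact trF_zero r
    set x : F := a * z⁻¹ with hx_def
    have hx : x ≠ 0 := mul_ne_zero ha (inv_ne_zero hz)
    have hz_eq : a * x⁻¹ = z := by rw [hx_def]; field_simp
    have e1 : z * u = z + z * t⁻¹ + z * (1 + t)⁻¹ := by rw [hu_def]; ring
    have e2 : z * t⁻¹ = a * (t * x)⁻¹ := by
      rw [mul_inv_rev, ← hz_eq]; ring
    have e3 : z * (1 + t)⁻¹ = a * ((1 + t) * x)⁻¹ := by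
      rw [mul_inv_rev, ← hz_eq]; ring
    rw [e1, trF_add, trF_add, e2, e3, ← hz_eq]
    rw [heq x hx, heq (t * x) (mul_ne_zero ht0 hx), heq ((1 + t) * x) (mul_ne_zero ht1' hx)]
    rw [← trF_add, ← trF_add]
    have : x + t * x + (1 + t) * x = 2 * (x + t * x) := by ring
    rw [this]
    have h2 : (2 : F) = 0 := by exact_mod_cast CharP.cast_eq_zero F 2
    rw [h2, zero_mul]
    exact trF_zero r
  obtain ⟨y, hy⟩ := trF_exists_ne r (by omega) hF
  apply hy
  have : y = (y * u⁻¹) * u := by field_simp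
  rw [this]
  exact htr _

end tr2sec

section final
variable [Fintype F] [DecidableEq F]

lemma eq_of_trF [CharP F 2] (r : ℕ) (hr : 1 ≤ r) (hF : Fintype.card F = 2 ^ r)
    (b : F) (hb : ∀ x : F, trF r (b * x) = 0) : b = 0 := by
  by_contra hb0
  obtain ⟨y, hy⟩ := trF_exists_ne r hr hF
  apply hy
  have : y = b * (b⁻¹ * y) := by field_simp
  rw [this]
  exact hb _

end final

end AuxLemmas

/-- For `r ≥ 3`, the map `c_1 : F_q → F_2^(q−2)`,
`a ↦ (tr(a·γ_1⁻¹), …, tr(a·γ_{q/2−1}⁻¹), tr(a·γ_1⁻¹), …, tr(a·γ_{q/2−1}⁻¹))`,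
where `γ_1, …, γ_{q/2−1}` enumerate the nonzero elements of `Θ(F_q) = {α² + α : α ∈ F_q}`,
is an injective `F_2`-linear (additive) map whose image is exactly the dual code `C_1^⊥`;
in particular `C_1^⊥` has exactly `q` elements. -/
theorem c1_injective_additive_range_eq_dual {F : Type*} [Field F] [Fintype F] [DecidableEq F]
    (r : ℕ) (hr : 3 ≤ r) (hF : Fintype.card F = 2 ^ r)
    (γ : Fin (2 ^ (r - 1) - 1) → F) (hγinj : Function.Injective γ)
    (hγran : Set.range γ = {β : F | β ≠ 0 ∧ ∃ α : F, β = α ^ 2 + α})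
    (hN : 2 ^ r - 2 = (2 ^ (r - 1) - 1) + (2 ^ (r - 1) - 1)) :
    Function.Injective (cw r (doubledInvVec γ hN)) ∧
    (∀ a a' : F, cw r (doubledInvVec γ hN) (a + a')
        = cw r (doubledInvVec γ hN) a + cw r (doubledInvVec γ hN) a') ∧
    Set.range (cw r (doubledInvVec γ hN)) = dualSet (doubledInvVec γ hN) ∧
    Nat.card (dualSet (doubledInvVec γ hN)) = 2 ^ r := by
  classical
  haveI hchar : CharP F 2 := charF hF
  set n := 2 ^ r - 2 with hn
  set v : Fin n → F := doubledInvVec γ hN with hv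
  have hγ_ne : ∀ j, γ j ≠ 0 := by
    intro j
    have : γ j ∈ Set.range γ := ⟨j, rfl⟩
    rw [hγran] at this
    exact this.1
  have hγ_tr : ∀ j, trF r (γ j) = 0 := by
    intro j
    have : γ j ∈ Set.range γ := ⟨j, rfl⟩
    rw [hγran] at this
    exact (trF_AS r (by omega) hF (γ j)).mpr this.2
  have hγ_mem : ∀ β : F, β ≠ 0 → trF r β = 0 → ∃ j, γ j = β := by
    intro β h0 htr
    have : β ∈ Set.range γ := by
      rw [hγran]
      exact ⟨h0, (trF_AS r (by omega) hF β).mp htr⟩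
    exact this
  -- additivity
  have hadd : ∀ a a' : F, cw r v (a + a') = cw r v a + cw r v a' := by
    intro a a'
    funext l
    show tr2 r ((a + a') * v l) = tr2 r (a * v l) + tr2 r (a' * v l)
    rw [add_mul]
    exact tr2_add r hF _ _
  -- injectivity
  have hinj : Function.Injective (cw r v) := by
    intro a a' hcw
    by_contra hne
    set b := a + a' with hb
    have hb0 : b ≠ 0 := by
      intro hc
      apply hne
      calc a = a + (a' + a') := by rw [CharTwo.add_self_eq_zero, add_zero]
        _ = b + a' := by rw [hb]; ring
        _ = a' := by rw [hc, zero_add]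
    have hzero : ∀ l, tr2 r (b * v l) = 0 := by
      intro l
      have : cw r v b l = cw r v a l + cw r v a' l := by rw [hadd]; rfl
      rw [hcw] at this
      have h2 : cw r v a' l + cw r v a' l = 0 := CharTwo.add_self_eq_zero _
      show tr2 r (b * v l) = 0
      calc tr2 r (b * v l) = cw r v b l := rfl
        _ = 0 := by rw [this, h2]
    refine key_inj r hr hF b hb0 ?_
    intro β hβ0 hβtr
    obtain ⟨j, hj⟩ := hγ_mem β hβ0 hβtr
    obtain ⟨lj, hlj⟩ : ∃ l : Fin n, v l = β⁻¹ := by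
      refine ⟨Fin.cast hN.symm (Fin.castAdd _ j), ?_⟩
      rw [hv]
      unfold doubledInvVec
      rw [show Fin.cast hN (Fin.cast hN.symm (Fin.castAdd _ j)) = Fin.castAdd _ j from rfl]
      rw [Fin.append_left, hj]
    have := hzero lj
    rw [hlj] at this
    exact (tr2_eq_zero_iff r _).mp this
  refine ⟨hinj, hadd, ?_⟩
  -- module structure
  letI : Algebra (ZMod 2) F := ZMod.algebra F 2
  have hsmul_val : ∀ (c : ZMod 2) (x : F), (c.val : ℕ) • x = c • x := by
    intro c x
    rw [nsmul_eq_mul, ZMod.natCast_val]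
    rfl
  have hc01 : ∀ c : ZMod 2, c = 0 ∨ c = 1 := by decide
  -- the linear map φ
  set φ : (Fin n → ZMod 2) →ₗ[ZMod 2] F :=
    { toFun := fun u => ∑ l, u l • v l
      map_add' := by
        intro u1 u2
        simp [add_smul, Finset.sum_add_distrib]
      map_smul' := by
        intro c u1
        simp [Finset.smul_sum, mul_smul] } with hφ
  have hcode : ∀ u, u ∈ codeSet v ↔ φ u = 0 := by
    intro u
    show (∑ l, (u l).val • v l = 0) ↔ (∑ l, u l • v l = 0)
    rw [Finset.sum_congr rfl fun l _ => hsmul_val (u l) (v l)]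
  -- the trace functionals
  have htr2_smul : ∀ (a : F) (c : ZMod 2) (x : F), tr2 r (a * (c • x)) = c * tr2 r (a * x) := by
    intro a c x
    rcases hc01 c with rfl | rfl
    · rw [zero_smul, mul_zero, tr2_zero, zero_mul]
    · rw [one_smul, one_mul]
  set T : F → (F →ₗ[ZMod 2] ZMod 2) := fun a =>
    { toFun := fun x => tr2 r (a * x)
      map_add' := by
        intro x y
        show tr2 r (a * (x + y)) = tr2 r (a * x) + tr2 r (a * y)
        rw [mul_add]
        exact tr2_add r hF _ _
      map_smul' := fun c x => htr2_smul a c x } with hT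
  have hT_inj : Function.Injective T := by
    intro a a' hTa
    have hz : ∀ x : F, tr2 r ((a + a') * x) = 0 := by
      intro x
      have h1 : tr2 r (a * x) = tr2 r (a' * x) := by
        have := congrArg (fun f : F →ₗ[ZMod 2] ZMod 2 => f x) hTa
        exact this
      rw [add_mul]
      rw [tr2_add r hF, h1, CharTwo.add_self_eq_zero]
    have : ∀ x : F, trF r ((a + a') * x) = 0 :=
      fun x => (tr2_eq_zero_iff r _).mp (hz x)
    have hb := eq_of_trF r (by omega) hF _ this
    calc a = a + (a' + a') := by rw [CharTwo.add_self_eq_zero, add_zero]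
      _ = (a + a') + a' := by ring
      _ = a' := by rw [hb, zero_add]
  -- cardinality of the dual space
  haveI hfinD : Finite (F →ₗ[ZMod 2] ZMod 2) :=
    Finite.of_injective (fun f => (f : F → ZMod 2)) DFunLike.coe_injective
  haveI : Fintype (F →ₗ[ZMod 2] ZMod 2) := Fintype.ofFinite _
  have hfr : Module.finrank (ZMod 2) F = r := by
    have h1 := Module.card_eq_pow_finrank (K := ZMod 2) (V := F)
    rw [ZMod.card, hF] at h1
    exact (Nat.pow_right_injective (le_refl 2) h1.symm)
  have hcardD : Fintype.card (F →ₗ[ZMod 2] ZMod 2) = Fintype.card F := by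
    have h1 := Module.card_eq_pow_finrank (K := ZMod 2) (V := Module.Dual (ZMod 2) F)
    rw [ZMod.card, Subspace.dual_finrank_eq, hfr] at h1
    rw [hF]
    exact h1
  have hT_surj : Function.Surjective T := by
    have := (Fintype.bijective_iff_injective_and_card T).mpr ⟨hT_inj, hcardD.symm⟩
    exact this.2
  -- range = dualSet
  have hsub : Set.range (cw r v) ⊆ dualSet v := by
    rintro w ⟨a, rfl⟩
    intro u hu
    have hphiu : φ u = 0 := (hcode u).mp hu
    have : ∑ l, cw r v a l * u l = ∑ l, (T a) (u l • v l) := by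
      refine Finset.sum_congr rfl fun l _ => ?_
      show cw r v a l * u l = tr2 r (a * (u l • v l))
      rw [htr2_smul, mul_comm]
      rfl
    rw [this, ← map_sum]
    show (T a) (φ u) = 0
    rw [hphiu, map_zero]
  have hsup : dualSet v ⊆ Set.range (cw r v) := by
    intro w hw
    set fw : (Fin n → ZMod 2) →ₗ[ZMod 2] ZMod 2 :=
      { toFun := fun u => ∑ l, w l * u l
        map_add' := by
          intro u1 u2
          simp [mul_add, Finset.sum_add_distrib]
        map_smul' := by
          intro c u1
          simp [Finset.mul_sum, mul_left_comm] } with hfw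
    set K := LinearMap.ker φ with hK
    have hwK : K ≤ LinearMap.ker fw := by
      intro u hu
      rw [LinearMap.mem_ker] at hu ⊢
      exact hw u ((hcode u).mpr hu)
    set φbar := K.liftQ φ (le_refl K) with hφbar
    have hφbar_inj : Function.Injective φbar := by
      rw [← LinearMap.ker_eq_bot]
      exact Submodule.ker_liftQ_eq_bot K φ (le_refl K) (le_refl K)
    set e := LinearEquiv.ofInjective φbar hφbar_inj with he
    set q1 := K.liftQ fw hwK with hq1
    obtain ⟨p', hcompl⟩ := Submodule.exists_isCompl (LinearMap.range φbar)
    set proj := (LinearMap.range φbar).projectionOnto p' hcompl with hproj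
    set lam : F →ₗ[ZMod 2] ZMod 2 := q1 ∘ₗ (e.symm : _ →ₗ[ZMod 2] _) ∘ₗ proj with hlam_def
    have hlam : ∀ u, lam (φ u) = fw u := by
      intro u
      show q1 (e.symm (proj (φ u))) = fw u
      have h2 : φ u = ((e (Submodule.Quotient.mk u) : LinearMap.range φbar) : F) := by
        rw [LinearEquiv.ofInjective_apply]
        exact (Submodule.liftQ_apply K φ u).symm
      rw [h2, hproj, Submodule.projectionOnto_apply_left hcompl, LinearEquiv.symm_apply_apply]
      exact Submodule.liftQ_apply K fw u
    obtain ⟨a, ha⟩ := hT_surj lam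
    have key : ∀ l : Fin n, lam (v l) = w l := by
      intro l
      set δ : Fin n → ZMod 2 := fun l' => if l' = l then 1 else 0 with hδ
      have h1 : fw δ = w l := by
        have e1 : fw δ = ∑ l', w l' * δ l' := rfl
        rw [e1]
        have hterm : ∀ l', w l' * δ l' = if l' = l then w l' else 0 := by
          intro l'
          rw [hδ]
          by_cases hll : l' = l <;> simp [hll]
        rw [Finset.sum_congr rfl fun l' _ => hterm l',
          Finset.sum_ite_eq' Finset.univ l (fun l' => w l')]
        simp
      have h2 : φ δ = v l := by
        have e1 : φ δ = ∑ l', δ l' • v l' := rfl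
        rw [e1]
        have hterm : ∀ l', δ l' • v l' = if l' = l then v l' else 0 := by
          intro l'
          rw [hδ]
          by_cases hll : l' = l <;> simp [hll]
        rw [Finset.sum_congr rfl fun l' _ => hterm l',
          Finset.sum_ite_eq' Finset.univ l (fun l' => v l')]
        simp
      rw [← h1, ← h2, hlam]
    refine ⟨a, ?_⟩
    funext l
    have : cw r v a l = lam (v l) := by rw [← ha]; rfl
    rw [this, key l]
  have hrange : Set.range (cw r v) = dualSet v := Set.Subset.antisymm hsub hsup
  refine ⟨hrange, ?_⟩
  rw [← hrange]
  rw [Nat.card_range_of_injective hinj, Nat.card_eq_fintype_card, hF]
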